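/- Let n ≥ 2, let x : Fin n → Bool with card {i | x i = false} = card {i | x i = true}, and let M : Fin n → Fin n satisfy M (M i) = i, M i ≠ i, and x (M i) = x i for all i (the b = 0 case of Boolean Hidden Hypermatching, with balanced x). Then for all j, k : Fin n, P x M (j,k) = 2/n² if x j = x k and P x M (j,k) = 0 otherwise; consequently, ∑_{j,k} | P x M (j,k) − 1/n² | = 1, i.e. the joint distribution of the reduction's sample pair (A, B) is at ℓ1 distance exactly 1 from the uniform product distribution on Fin n × Fin n. -/

import Mathlib

/-- Joint law of the pair `(A, B)` in the BHH reduction of Theorem 7.1: a shared index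
`r` is uniform on `Fin n`, Alice samples `A` uniformly from `{i | x i = x r}`, and Bob
samples `B` uniformly from `{r, M r}`. -/
noncomputable def redP {n : ℕ} (x : Fin n → Bool) (M : Fin n → Fin n)
    (jk : Fin n × Fin n) : ℝ :=
  ∑ r : Fin n,
    (1 / (n : ℝ)) *
      (if x r = x jk.1 then
        ((Finset.univ.filter fun i : Fin n => x i = x jk.1).card : ℝ)⁻¹ else 0) *
      (1 / 2) *
      ((if jk.2 = r then (1 : ℝ) else 0) + (if jk.2 = M r then (1 : ℝ) else 0))

/-- In the `b = 0` case of Boolean Hidden Hypermatching with balanced `x`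
(`x (M i) = x i` everywhere and `|{x = false}| = |{x = true}|`), the reduction's
sample pair satisfies `P x M (j,k) = 2/n²` when `x j = x k` and `0` otherwise,
hence is at ℓ1 distance exactly `1` from the uniform product distribution. -/
theorem redP_far_of_bhh_zero (n : ℕ) (hn : 2 ≤ n) (x : Fin n → Bool)
    (hbal : (Finset.univ.filter fun i : Fin n => x i = false).card =
      (Finset.univ.filter fun i : Fin n => x i = true).card)
    (M : Fin n → Fin n) (hM : ∀ i, M (M i) = i) (hMne : ∀ i, M i ≠ i)
    (hx : ∀ i, x (M i) = x i) :
    (∀ j k : Fin n,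
      redP x M (j, k) = if x j = x k then 2 / (n : ℝ) ^ 2 else 0) ∧
    ∑ j : Fin n, ∑ k : Fin n, |redP x M (j, k) - 1 / (n : ℝ) ^ 2| = 1 := by
  have hn0 : (n : ℝ) ≠ 0 := by positivity
  -- card of each level set is n/2
  have hsum : (Finset.univ.filter fun i : Fin n => x i = false).card +
      (Finset.univ.filter fun i : Fin n => x i = true).card = n := by
    classical
    have hneg : (Finset.univ.filter fun i : Fin n => ¬ x i = false) =
        (Finset.univ.filter fun i : Fin n => x i = true) := by
      apply Finset.filter_congr; intro i _; simp
    have h := Finset.card_filter_add_card_filter_not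
      (s := (Finset.univ : Finset (Fin n))) (p := fun i : Fin n => x i = false)
    rw [hneg] at h
    simpa using h
  have hcard : ∀ j : Fin n,
      (((Finset.univ.filter fun i : Fin n => x i = x j).card : ℝ)) = n / 2 := by
    intro j
    have h2 : 2 * (Finset.univ.filter fun i : Fin n => x i = x j).card = n := by
      cases hxj : x j <;> omega
    have := congrArg (Nat.cast (R := ℝ)) h2
    push_cast at this
    linarith
  -- pointwise value of redP
  have hP : ∀ j k : Fin n,
      redP x M (j, k) = if x j = x k then 2 / (n : ℝ) ^ 2 else 0 := by
    intro j k
    have hMkk : M k ≠ k := hMne k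
    have key : ∀ r : Fin n,
        (1 / (n : ℝ)) *
          (if x r = x j then
            ((Finset.univ.filter fun i : Fin n => x i = x j).card : ℝ)⁻¹ else 0) *
          (1 / 2) *
          ((if k = r then (1 : ℝ) else 0) + (if k = M r then (1 : ℝ) else 0)) =
        (if r = k then (if x j = x k then 1 / (n : ℝ) ^ 2 else 0) else 0) +
        (if r = M k then (if x j = x k then 1 / (n : ℝ) ^ 2 else 0) else 0) := by
      intro r
      rw [hcard j]
      by_cases h1 : r = k
      · simp only [h1]
        have h2 : k ≠ M k := fun h => hMkk h.symm
        simp only [if_pos rfl, if_neg h2]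
        by_cases hxx : x j = x k
        · rw [if_pos hxx.symm, if_pos hxx]
          field_simp
          rw [if_pos trivial, if_pos trivial, add_zero, add_zero, mul_one_div_cancel (pow_ne_zero 2 hn0)]
        · rw [if_neg (fun h => hxx h.symm), if_neg hxx]
          simp
      · by_cases h2 : r = M k
        · simp only [h2, hM k]
          simp only [if_neg (fun h : k = M k => hMkk h.symm), if_pos rfl,
            if_neg (fun h : M k = k => hMkk h)]
          rw [hx k]
          by_cases hxx : x j = x k
          · rw [if_pos hxx.symm, if_pos hxx]
            field_simp
            rw [if_pos trivial, if_pos trivial, zero_add, zero_add, mul_one_div_cancel (pow_ne_zero 2 hn0)]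
          · rw [if_neg (fun h => hxx h.symm), if_neg hxx]
            simp
        · have h3 : k ≠ r := fun h => h1 h.symm
          have h4 : k ≠ M r := by
            intro h
            exact h2 (by rw [h, hM])
          simp only [if_neg h3, if_neg h4, if_neg h1, if_neg h2]
          ring
    calc redP x M (j, k)
        = ∑ r : Fin n,
            ((if r = k then (if x j = x k then 1 / (n : ℝ) ^ 2 else 0) else 0) +
             (if r = M k then (if x j = x k then 1 / (n : ℝ) ^ 2 else 0) else 0)) := by
          unfold redP
          exact Finset.sum_congr rfl fun r _ => key r
      _ = (if x j = x k then 1 / (n : ℝ) ^ 2 else 0) +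
          (if x j = x k then 1 / (n : ℝ) ^ 2 else 0) := by
          rw [Finset.sum_add_distrib, Finset.sum_ite_eq' Finset.univ k,
            Finset.sum_ite_eq' Finset.univ (M k)]
          simp
      _ = if x j = x k then 2 / (n : ℝ) ^ 2 else 0 := by
          by_cases hxx : x j = x k
          · simp only [if_pos hxx]; ring
          · simp [hxx]
  refine ⟨hP, ?_⟩
  have habs : ∀ j k : Fin n,
      |redP x M (j, k) - 1 / (n : ℝ) ^ 2| = 1 / (n : ℝ) ^ 2 := by
    intro j k
    rw [hP j k]
    have h1 : (0 : ℝ) < 1 / (n : ℝ) ^ 2 := by positivity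
    by_cases hxx : x j = x k
    · rw [if_pos hxx]
      have h2 : 2 / (n : ℝ) ^ 2 - 1 / (n : ℝ) ^ 2 = 1 / (n : ℝ) ^ 2 := by ring
      rw [h2, abs_of_pos h1]
    · rw [if_neg hxx]
      rw [abs_of_nonpos (by linarith)]
      ring
  simp only [habs, Finset.sum_const, Finset.card_univ, Fintype.card_fin, nsmul_eq_mul]
  field_simp
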